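/- Let T be a quantum operation from operators on (ℂ²)^{⊗N} to operators on (ℂ²)^{⊗N'} that decomposes as a tensor product T = ⊗_{ν=1}^{w} T_ν with respect to partitions [N] = K_1 ∪ … ∪ K_w and [N'] = L_1 ∪ … ∪ L_w into disjoint blocks, where each T_ν is a quantum operation from operators on (ℂ²)^{⊗|K_ν|} to operators on (ℂ²)^{⊗|L_ν|}. Let A ⊆ [N'], let Γ = {ν : L_ν ∩ A ≠ ∅}, and let B = ∪_{ν∈Γ} K_ν. Then for all density matrices ρ, σ on N qubits, D(T(ρ)|_A, T(σ)|_A) ≤ D(ρ|_B, σ|_B). -/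

import Mathlib

open scoped ComplexOrder

noncomputable section

/-- The state space of `n` qubits: linear operators on `(ℂ²)^{⊗ n}`,
represented as matrices indexed by `Fin n → Fin 2`. -/
abbrev QState (n : ℕ) := Matrix (Fin n → Fin 2) (Fin n → Fin 2) ℂ

/-- A density matrix: Hermitian (implied), positive semidefinite, trace one. -/
def IsDensityMatrix {α : Type*} [Fintype α] (ρ : Matrix α α ℂ) : Prop :=
  ρ.PosSemidef ∧ ρ.trace = 1

/-- The trace norm of a matrix: `tr √(Aᴴ A)`, the sum of the singular values. -/
noncomputable def traceNorm {α : Type*} [Fintype α] [DecidableEq α] (A : Matrix α α ℂ) : ℝ :=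
  ((Matrix.posSemidef_conjTranspose_mul_self A).1.cfc Real.sqrt).trace.re

/-- The trace distance `D(ρ,σ) = ‖ρ - σ‖_tr / 2`. -/
noncomputable def traceDist {α : Type*} [Fintype α] [DecidableEq α] (ρ σ : Matrix α α ℂ) : ℝ :=
  traceNorm (ρ - σ) / 2

/-- The extension `T ⊗ id_γ` of a linear map on matrices, acting blockwise. -/
def tensorIdMap {α β γ : Type*} (T : Matrix α α ℂ →ₗ[ℂ] Matrix β β ℂ)
    (M : Matrix (α × γ) (α × γ) ℂ) : Matrix (β × γ) (β × γ) ℂ :=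
  Matrix.of fun p q => T (Matrix.of fun a a' => M (a, p.2) (a', q.2)) p.1 q.1

/-- Complete positivity: all the extensions `T ⊗ id_m` preserve positive semidefiniteness. -/
def IsCompletelyPositive {α β : Type*} [Fintype α] [Fintype β]
    (T : Matrix α α ℂ →ₗ[ℂ] Matrix β β ℂ) : Prop :=
  ∀ (m : ℕ) (M : Matrix (α × Fin m) (α × Fin m) ℂ),
    M.PosSemidef → (tensorIdMap T M).PosSemidef

/-- A quantum operation: a trace-preserving, completely positive linear map. -/
def IsQuantumOp {α β : Type*} [Fintype α] [Fintype β]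
    (T : Matrix α α ℂ →ₗ[ℂ] Matrix β β ℂ) : Prop :=
  (∀ M, (T M).trace = M.trace) ∧ IsCompletelyPositive T

/-- The depolarizing channel at rate `η` on `d × d` matrices:
`ρ ↦ (1-η) ρ + (η tr ρ / dim) I`. -/
noncomputable def depolarize (η : ℝ) (d : Type*) [Fintype d] [DecidableEq d] :
    Matrix d d ℂ →ₗ[ℂ] Matrix d d ℂ :=
  (1 - η : ℂ) • LinearMap.id +
    (Matrix.traceLinearMap d ℂ ℂ).smulRight (((η : ℂ) / (Fintype.card d : ℂ)) • (1 : Matrix d d ℂ))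

/-- Depolarization at rate `η` of the single qubit `i` of an `n`-qubit system. -/
noncomputable def depolarizeAt (η : ℝ) {n : ℕ} (i : Fin n) : QState n →ₗ[ℂ] QState n where
  toFun ρ := Matrix.of fun x y =>
    (1 - η : ℂ) * ρ x y +
      (η : ℂ) * (if x i = y i then
        (2 : ℂ)⁻¹ * ∑ b : Fin 2, ρ (Function.update x i b) (Function.update y i b) else 0)
  map_add' ρ σ := by
    ext x y
    simp only [Matrix.of_apply, Matrix.add_apply]
    split
    · rw [Finset.sum_add_distrib]; ring
    · ring
  map_smul' c ρ := by
    ext x y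
    simp only [Matrix.of_apply, Matrix.smul_apply, smul_eq_mul, RingHom.id_apply]
    split
    · rw [← Finset.mul_sum]; ring
    · ring

/-- `E_η^{⊗n}`: independent depolarization at rate `η` of each of the `n` qubits. -/
noncomputable def depolarizeN (η : ℝ) (n : ℕ) : QState n →ₗ[ℂ] QState n :=
  (List.finRange n).foldr (fun i acc => depolarizeAt η i ∘ₗ acc) LinearMap.id

/-- `glue A x z` is the bit string on `n` qubits equal to `x` on `A` and `z` outside `A`. -/
def glue {n : ℕ} (A : Finset (Fin n)) (x : A → Fin 2) (z : {i : Fin n // i ∉ A} → Fin 2) :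
    Fin n → Fin 2 :=
  fun i => if h : i ∈ A then x ⟨i, h⟩ else z ⟨i, h⟩

/-- `ptr A ρ = ρ|_A`: the partial trace of an `n`-qubit state over all the qubits outside `A`. -/
noncomputable def ptr {n : ℕ} (A : Finset (Fin n)) (ρ : QState n) :
    Matrix (A → Fin 2) (A → Fin 2) ℂ :=
  Matrix.of fun x y => ∑ z : ({i : Fin n // i ∉ A} → Fin 2), ρ (glue A x z) (glue A y z)

/-- Given a partition of the qubits `[N]` into the fibers of `f : Fin N → Fin w` and matrices
`M ν` on the blocks, `assemble f M` is the tensor product matrix `⊗_ν M ν` on all `N` qubits. -/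
def assemble {N w : ℕ} (f : Fin N → Fin w)
    (M : ∀ ν : Fin w,
      Matrix ({i : Fin N // f i = ν} → Fin 2) ({i : Fin N // f i = ν} → Fin 2) ℂ) :
    QState N :=
  Matrix.of fun x y => ∏ ν : Fin w, M ν (fun j => x j.1) (fun j => y j.1)

/-- `T` decomposes as the tensor product `⊗_ν Tb ν` of quantum gates of fan-in `≤ k`, with
respect to the partitions of the input qubits `[N]` into the fibers `K_ν` of `f` and of the
output qubits `[N']` into the fibers `L_ν` of `g`. -/
def IsGateDecomp {N N' w : ℕ} (k : ℕ) (T : QState N →ₗ[ℂ] QState N')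
    (f : Fin N → Fin w) (g : Fin N' → Fin w)
    (Tb : ∀ ν : Fin w,
      Matrix ({i : Fin N // f i = ν} → Fin 2) ({i : Fin N // f i = ν} → Fin 2) ℂ →ₗ[ℂ]
        Matrix ({i : Fin N' // g i = ν} → Fin 2) ({i : Fin N' // g i = ν} → Fin 2) ℂ) : Prop :=
  (∀ ν, IsQuantumOp (Tb ν)) ∧
  (∀ ν : Fin w, Fintype.card {i : Fin N // f i = ν} ≤ k) ∧
  (∀ M, T (assemble f M) = assemble g fun ν => Tb ν (M ν))

/-- A quantum circuit over the gate set `G_k` of all quantum gates of fan-in `≤ k`: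
a sequence of `depth` levels, with `nq i` qubits at level `i`, where each level operation
decomposes as a tensor product of quantum gates of fan-in `≤ k`. -/
structure QCircuit (k : ℕ) where
  depth : ℕ
  nq : Fin (depth + 1) → ℕ
  op : ∀ i : Fin depth, QState (nq i.castSucc) →ₗ[ℂ] QState (nq i.succ)
  isGate : ∀ i : Fin depth, ∃ (w : ℕ) (f : Fin (nq i.castSucc) → Fin w)
    (g : Fin (nq i.succ) → Fin w)
    (Tb : ∀ ν : Fin w,
      Matrix ({j : Fin (nq i.castSucc) // f j = ν} → Fin 2)
          ({j : Fin (nq i.castSucc) // f j = ν} → Fin 2) ℂ →ₗ[ℂ]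
        Matrix ({j : Fin (nq i.succ) // g j = ν} → Fin 2)
          ({j : Fin (nq i.succ) // g j = ν} → Fin 2) ℂ),
    IsGateDecomp k (op i) f g Tb

/-- The width of a circuit: the maximum number of qubits at any level. -/
def QCircuit.width {k : ℕ} (Q : QCircuit k) : ℕ := Finset.univ.sup Q.nq

/-- The first `i` levels of the perturbed circuit `Q_η`: the gates `T_0, …, T_{i-1}` interlaced
with depolarizing noise at rate `η` on every qubit between consecutive gates. -/
noncomputable def QCircuit.runP {k : ℕ} (Q : QCircuit k) (η : ℝ) :
    (i : ℕ) → (h : i ≤ Q.depth) →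
      (QState (Q.nq ⟨0, Nat.succ_pos _⟩) →ₗ[ℂ] QState (Q.nq ⟨i, Nat.lt_succ_of_le h⟩))
  | 0, _ => LinearMap.id
  | (i + 1), h =>
      Q.op ⟨i, h⟩ ∘ₗ
        (if i = 0 then LinearMap.id
          else depolarizeN η (Q.nq ⟨i, Nat.lt_succ_of_le (Nat.le_of_succ_le h)⟩)) ∘ₗ
        Q.runP η i (Nat.le_of_succ_le h)

/-- The perturbed circuit `Q_η = T_{t-1} ∘ E_η^{⊗n_{t-1}} ∘ ⋯ ∘ E_η^{⊗n_1} ∘ T_0`. -/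
noncomputable def QCircuit.perturbed {k : ℕ} (Q : QCircuit k) (η : ℝ) :
    QState (Q.nq ⟨0, Nat.succ_pos _⟩) →ₗ[ℂ] QState (Q.nq (Fin.last Q.depth)) :=
  Q.runP η Q.depth le_rfl

end
namespace TNAux
open Matrix

variable {α : Type*} [Fintype α] [DecidableEq α]

lemma diag_nonneg {M : Matrix α α ℂ} (hM : M.PosSemidef) (i : α) : 0 ≤ M i i := by
  simpa [dotProduct, Matrix.mulVec, Pi.single_apply] using hM.dotProduct_mulVec_nonneg (Pi.single i 1)

lemma unitary_conj_mul {U : Matrix α α ℂ} (hU : U ∈ Matrix.unitaryGroup α ℂ)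
    (d e : α → ℂ) :
    (U * diagonal d * Uᴴ) * (U * diagonal e * Uᴴ) = U * diagonal (d * e) * Uᴴ := by
  have h : Uᴴ * U = 1 := Matrix.UnitaryGroup.star_mul_self ⟨U, hU⟩
  calc (U * diagonal d * Uᴴ) * (U * diagonal e * Uᴴ)
      = U * diagonal d * (Uᴴ * U) * diagonal e * Uᴴ := by
        simp only [Matrix.mul_assoc]
    _ = U * diagonal (d * e) * Uᴴ := by
        rw [h]; simp only [Matrix.mul_one, Matrix.mul_assoc, Matrix.diagonal_mul_diagonal]
        rfl

lemma trace_unitary_conj {U : Matrix α α ℂ} (hU : U ∈ Matrix.unitaryGroup α ℂ)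
    (d : α → ℂ) : (U * diagonal d * Uᴴ).trace = ∑ i, d i := by
  have h : Uᴴ * U = 1 := Matrix.UnitaryGroup.star_mul_self ⟨U, hU⟩
  rw [Matrix.trace_mul_cycle, h, Matrix.one_mul, Matrix.trace_diagonal]

/-- For Hermitian `H`, the trace norm is the sum of the absolute values of eigenvalues. -/
lemma traceNorm_hermitian {H : Matrix α α ℂ} (hH : H.IsHermitian) :
    traceNorm H = ∑ i, |hH.eigenvalues i| := by
  set U : Matrix α α ℂ := (hH.eigenvectorUnitary : Matrix α α ℂ) with hUdef
  have hU : U ∈ Matrix.unitaryGroup α ℂ := hH.eigenvectorUnitary.2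
  set lam := hH.eigenvalues with hlam
  set S : Matrix α α ℂ := U * diagonal (fun i => ((|lam i| : ℝ) : ℂ)) * Uᴴ with hS
  have hSpsd : S.PosSemidef := by
    refine PosSemidef.mul_mul_conjTranspose_same ?_ U
    refine PosSemidef.diagonal ?_
    intro i
    simpa using Complex.zero_le_real.mpr (abs_nonneg (lam i))
  have hspec : H = U * diagonal (RCLike.ofReal ∘ lam) * Uᴴ := hH.spectral_theorem
  have hsq : S ^ 2 = Hᴴ * H := by
    rw [hH.eq, sq, hS, unitary_conj_mul hU, hspec, unitary_conj_mul hU]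
    have hfun : ((fun i => ((|lam i| : ℝ) : ℂ)) * (fun i => ((|lam i| : ℝ) : ℂ)))
        = ((RCLike.ofReal ∘ lam) * (RCLike.ofReal ∘ lam)) := by
      funext i
      show ((|lam i| : ℝ) : ℂ) * ((|lam i| : ℝ) : ℂ) = ((lam i : ℝ) : ℂ) * ((lam i : ℝ) : ℂ)
      rw [← Complex.ofReal_mul, ← Complex.ofReal_mul, ← sq, ← sq, sq_abs]
    rw [hfun]
  have : S = (Matrix.posSemidef_conjTranspose_mul_self H).1.cfc Real.sqrt := by
    open scoped MatrixOrder in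
    rw [← IsHermitian.cfc_eq, ← cfcₙ_eq_cfc (hf0 := Real.sqrt_zero), ← CFC.sqrt_eq_real_sqrt _
      (Matrix.posSemidef_conjTranspose_mul_self H).nonneg]
    exact (CFC.sqrt_unique (by rw [← sq]; exact hsq) hSpsd.nonneg).symm
  rw [traceNorm, ← this, hS, trace_unitary_conj hU]
  rw [← Complex.ofReal_sum]
  exact Complex.ofReal_re _


lemma exists_jordan {H : Matrix α α ℂ} (hH : H.IsHermitian) :
    ∃ P Q : Matrix α α ℂ, P.PosSemidef ∧ Q.PosSemidef ∧ H = P - Q ∧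
      traceNorm H = P.trace.re + Q.trace.re := by
  set U : Matrix α α ℂ := (hH.eigenvectorUnitary : Matrix α α ℂ) with hUdef
  have hU : U ∈ Matrix.unitaryGroup α ℂ := hH.eigenvectorUnitary.2
  set lam := hH.eigenvalues with hlam
  refine ⟨U * diagonal (fun i => ((max (lam i) 0 : ℝ) : ℂ)) * Uᴴ,
    U * diagonal (fun i => ((max (-lam i) 0 : ℝ) : ℂ)) * Uᴴ, ?_, ?_, ?_, ?_⟩
  · refine PosSemidef.mul_mul_conjTranspose_same (PosSemidef.diagonal ?_) U
    intro i; simpa using Complex.zero_le_real.mpr (le_max_right _ _)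
  · refine PosSemidef.mul_mul_conjTranspose_same (PosSemidef.diagonal ?_) U
    intro i; simpa using Complex.zero_le_real.mpr (le_max_right _ _)
  · rw [← Matrix.sub_mul, ← Matrix.mul_sub, Matrix.diagonal_sub]
    have : (fun i => ((max (lam i) 0 : ℝ) : ℂ) - ((max (-lam i) 0 : ℝ) : ℂ))
        = RCLike.ofReal ∘ lam := by
      funext i
      rw [← Complex.ofReal_sub, max_zero_sub_max_neg_zero_eq_self]
      rfl
    have hs : H = U * diagonal (RCLike.ofReal ∘ lam) * Uᴴ := hH.spectral_theorem
    rw [this, ← hs]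
  · rw [traceNorm_hermitian hH, trace_unitary_conj hU, trace_unitary_conj hU,
      ← Complex.ofReal_sum, ← Complex.ofReal_sum, Complex.ofReal_re, Complex.ofReal_re,
      ← Finset.sum_add_distrib]
    refine Finset.sum_congr rfl fun i _ => ?_
    rw [← max_zero_add_max_neg_zero_eq_abs_self]

lemma traceNorm_le_of_decomp {H P Q : Matrix α α ℂ} (hH : H.IsHermitian)
    (hP : P.PosSemidef) (hQ : Q.PosSemidef) (hdec : H = P - Q) :
    traceNorm H ≤ P.trace.re + Q.trace.re := by
  rw [traceNorm_hermitian hH]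
  set U : Matrix α α ℂ := (hH.eigenvectorUnitary : Matrix α α ℂ) with hUdef
  have hU : U ∈ Matrix.unitaryGroup α ℂ := hH.eigenvectorUnitary.2
  have hUU : U * Uᴴ = 1 := Matrix.mem_unitaryGroup_iff.mp hU
  set lam := hH.eigenvalues with hlam
  have hdiag : Uᴴ * H * U = diagonal (RCLike.ofReal ∘ lam) := by
    simpa [hUdef, hlam, Matrix.star_eq_conjTranspose] using hH.conjStarAlgAut_star_eigenvectorUnitary
  set P' := Uᴴ * P * U with hP'def
  set Q' := Uᴴ * Q * U with hQ'def
  have hP' : P'.PosSemidef := hP.conjTranspose_mul_mul_same U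
  have hQ' : Q'.PosSemidef := hQ.conjTranspose_mul_mul_same U
  have hsplit : Uᴴ * H * U = P' - Q' := by
    rw [hdec, Matrix.mul_sub, Matrix.sub_mul]
  have hentry : ∀ i, ((lam i : ℝ) : ℂ) = P' i i - Q' i i := by
    intro i
    have := congrFun (congrFun (hdiag.symm.trans hsplit) i) i
    simpa [Matrix.sub_apply, Matrix.diagonal_apply_eq] using this
  have htrP : P'.trace = P.trace := by
    rw [hP'def, Matrix.trace_mul_cycle, hUU, Matrix.one_mul]
  have htrQ : Q'.trace = Q.trace := by
    rw [hQ'def, Matrix.trace_mul_cycle, hUU, Matrix.one_mul]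
  have hsum : ∑ i, |lam i| ≤ ∑ i, ((P' i i).re + (Q' i i).re) := by
    refine Finset.sum_le_sum fun i _ => ?_
    have h1 := diag_nonneg hP' i
    have h2 := diag_nonneg hQ' i
    rw [Complex.nonneg_iff] at h1 h2
    have h3 : lam i = (P' i i).re - (Q' i i).re := by
      have := congrArg Complex.re (hentry i)
      simpa using this
    rw [abs_le]; constructor <;> [nlinarith [h1.1, h2.1]; nlinarith [h1.1, h2.1]]
  calc ∑ i, |lam i| ≤ ∑ i, ((P' i i).re + (Q' i i).re) := hsum
    _ = P.trace.re + Q.trace.re := by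
        rw [Finset.sum_add_distrib, ← htrP, ← htrQ, Matrix.trace, Matrix.trace]
        simp [Matrix.diag, Complex.re_sum]

lemma traceNorm_map_le {β : Type*} [Fintype β] [DecidableEq β]
    (L : Matrix α α ℂ → Matrix β β ℂ)
    (hsub : ∀ X Y, L (X - Y) = L X - L Y)
    (hpos : ∀ M, M.PosSemidef → (L M).PosSemidef)
    (htr : ∀ M, (L M).trace = M.trace)
    {H : Matrix α α ℂ} (hH : H.IsHermitian) : traceNorm (L H) ≤ traceNorm H := by
  obtain ⟨P, Q, hP, hQ, hPQ, htn⟩ := exists_jordan hH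
  have h1 : L H = L P - L Q := by rw [hPQ, hsub]
  have hherm : (L H).IsHermitian := by
    rw [h1]; exact ((hpos P hP).1.sub (hpos Q hQ).1)
  have h2 := traceNorm_le_of_decomp hherm (hpos P hP) (hpos Q hQ) h1
  rw [htr, htr] at h2
  rw [htn]
  exact h2

end TNAux

namespace QAux
open Matrix

/-- Sum over functions of a product of fiberwise factors equals product of fiberwise sums. -/
lemma sum_prod_fiber {ι J : Type*} [Fintype ι] [DecidableEq ι] [Fintype J] [DecidableEq J] (κ : ι → J)
    (F : ∀ ν : J, ({i : ι // κ i = ν} → Fin 2) → ℂ) :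
    ∑ s : ι → Fin 2, ∏ ν, F ν (fun j => s j.1) = ∏ ν, ∑ t, F ν t := by
  classical
  rw [Finset.prod_univ_sum (t := fun ν => (Finset.univ : Finset ({i : ι // κ i = ν} → Fin 2))), Fintype.piFinset_univ]
  exact Fintype.sum_equiv
    { toFun := fun s ν j => s j.1
      invFun := fun p i => p (κ i) ⟨i, rfl⟩
      left_inv := fun s => rfl
      right_inv := fun p => by
        funext ν j
        obtain ⟨i, hi⟩ := j
        subst hi
        rfl } _ _ (fun s => rfl)

variable {n : ℕ} (A : Finset (Fin n))

lemma restr_glue₁ (x : A → Fin 2) (z : {i : Fin n // i ∉ A} → Fin 2) :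
    (fun j : A => glue A x z j.1) = x := by
  funext j
  simp only [glue, j.2, dif_pos]

lemma restr_glue₂ (x : A → Fin 2) (z : {i : Fin n // i ∉ A} → Fin 2) :
    (fun j : {i : Fin n // i ∉ A} => glue A x z j.1) = z := by
  funext j
  have hj := j.2
  simp only [glue, hj, dif_neg, not_false_iff]

lemma glue_restr (s : Fin n → Fin 2) :
    glue A (fun j : A => s j.1) (fun j => s j.1) = s := by
  funext i
  unfold glue
  split <;> rfl

/-- The splitting of bit strings along `A`. -/
def gEquiv : ((A → Fin 2) × ({i : Fin n // i ∉ A} → Fin 2)) ≃ (Fin n → Fin 2) where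
  toFun p := glue A p.1 p.2
  invFun s := (fun j => s j.1, fun j => s j.1)
  left_inv p := by
    obtain ⟨x, z⟩ := p
    simp only [Prod.mk.injEq]
    exact ⟨restr_glue₁ A x z, restr_glue₂ A x z⟩
  right_inv s := glue_restr A s

lemma sum_glue (F : (Fin n → Fin 2) → ℂ) :
    ∑ x : A → Fin 2, ∑ z : {i : Fin n // i ∉ A} → Fin 2, F (glue A x z) = ∑ s, F s := by
  have h := Equiv.sum_comp (gEquiv A) F
  rw [← h, Fintype.sum_prod_type]
  rfl

lemma quadform_expand {γ : Type*} [Fintype γ] (M : Matrix γ γ ℂ) (v : γ → ℂ) :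
    star v ⬝ᵥ M *ᵥ v = ∑ i, ∑ j, star (v i) * (M i j * v j) := by
  simp [dotProduct, Matrix.mulVec, Finset.mul_sum]

lemma ptr_sub (X Y : QState n) : ptr A (X - Y) = ptr A X - ptr A Y := by
  ext x y
  simp [ptr, Finset.sum_sub_distrib]

lemma ptr_trace (ρ : QState n) : (ptr A ρ).trace = ρ.trace := by
  rw [Matrix.trace, Matrix.trace]
  calc ∑ x, (ptr A ρ).diag x = ∑ x, ∑ z, ρ (glue A x z) (glue A x z) := rfl
    _ = ∑ s, ρ s s := sum_glue A (fun s => ρ s s)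
    _ = ∑ s, ρ.diag s := rfl

lemma ptr_posSemidef {ρ : QState n} (hρ : ρ.PosSemidef) : (ptr A ρ).PosSemidef := by
  refine Matrix.PosSemidef.of_dotProduct_mulVec_nonneg ?_ ?_
  · ext x y
    simp only [conjTranspose_apply, ptr, of_apply, star_sum]
    exact Finset.sum_congr rfl fun z _ => hρ.1.apply _ _
  · intro v
    set u : ({i : Fin n // i ∉ A} → Fin 2) → (Fin n → Fin 2) → ℂ := fun z s =>
      if (fun j : {i : Fin n // i ∉ A} => s j.1) = z then v (fun j : A => s j.1) else 0 with hu
    have hval : ∀ (z : {i : Fin n // i ∉ A} → Fin 2) (x' : A → Fin 2) z₁,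
        u z (glue A x' z₁) = if z₁ = z then v x' else 0 := by
      intro z x' z₁
      simp only [hu, restr_glue₁, restr_glue₂]
    have h1 : ∀ z, star (u z) ⬝ᵥ ρ *ᵥ (u z)
        = ∑ x : A → Fin 2, ∑ y : A → Fin 2,
            star (v x) * (ρ (glue A x z) (glue A y z) * v y) := by
      intro z
      calc star (u z) ⬝ᵥ ρ *ᵥ (u z)
          = ∑ s, ∑ t, star (u z s) * (ρ s t * u z t) := quadform_expand ρ (u z)
        _ = ∑ x : A → Fin 2, ∑ z₁, ∑ y : A → Fin 2, ∑ z₂,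
              star (u z (glue A x z₁)) * (ρ (glue A x z₁) (glue A y z₂) * u z (glue A y z₂)) := by
            rw [← sum_glue A (fun s => ∑ t, star (u z s) * (ρ s t * u z t))]
            refine Finset.sum_congr rfl fun x _ => Finset.sum_congr rfl fun z₁ _ => ?_
            rw [← sum_glue A (fun t => star (u z (glue A x z₁)) * (ρ (glue A x z₁) t * u z t))]
        _ = ∑ x : A → Fin 2, ∑ y : A → Fin 2,
              star (v x) * (ρ (glue A x z) (glue A y z) * v y) := by
            refine Finset.sum_congr rfl fun x _ => ?_
            rw [Finset.sum_comm]
            refine Finset.sum_congr rfl fun y _ => ?_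
            simp only [hval, apply_ite (star : ℂ → ℂ), star_zero, ite_mul, zero_mul,
              mul_ite, mul_zero, Finset.sum_ite_irrel, Finset.sum_const_zero,
              Finset.sum_ite_eq', Finset.mem_univ, if_true]
    have key : star v ⬝ᵥ (ptr A ρ) *ᵥ v = ∑ z, star (u z) ⬝ᵥ ρ *ᵥ (u z) := by
      rw [quadform_expand]
      calc ∑ x, ∑ y, star (v x) * ((ptr A ρ) x y * v y)
          = ∑ x : A → Fin 2, ∑ y : A → Fin 2, ∑ z,
              star (v x) * (ρ (glue A x z) (glue A y z) * v y) := by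
            refine Finset.sum_congr rfl fun x _ => Finset.sum_congr rfl fun y _ => ?_
            show star (v x) * ((∑ z, ρ (glue A x z) (glue A y z)) * v y) = _
            rw [Finset.sum_mul, Finset.mul_sum]
        _ = ∑ x : A → Fin 2, ∑ z, ∑ y : A → Fin 2,
              star (v x) * (ρ (glue A x z) (glue A y z) * v y) := by
            exact Finset.sum_congr rfl fun x _ => Finset.sum_comm
        _ = ∑ z, ∑ x : A → Fin 2, ∑ y : A → Fin 2,
              star (v x) * (ρ (glue A x z) (glue A y z) * v y) := Finset.sum_comm
        _ = ∑ z, star (u z) ⬝ᵥ ρ *ᵥ (u z) := by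
            refine Finset.sum_congr rfl fun z _ => (h1 z).symm
    rw [key]
    exact Finset.sum_nonneg fun z _ => hρ.dotProduct_mulVec_nonneg (u z)


section Tdev
open Matrix

-- restriction to a fiber
def rf {n w : ℕ} (h : Fin n → Fin w) (ν : Fin w) (x : Fin n → Fin 2) :
    {i : Fin n // h i = ν} → Fin 2 := fun j => x j.1

lemma trace_stdB {γ : Type*} [Fintype γ] [DecidableEq γ] (p q : γ) :
    (Matrix.single p q (1:ℂ)).trace = if p = q then 1 else 0 := by
  rw [Matrix.trace]
  by_cases hpq : p = q
  · subst hpq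
    rw [if_pos rfl]
    calc ∑ i, (Matrix.single p p (1:ℂ)).diag i
        = ∑ i, if p = i then (1:ℂ) else 0 := by
          refine Finset.sum_congr rfl fun i _ => ?_
          show (if p = i ∧ p = i then (1:ℂ) else 0) = _
          by_cases h : p = i <;> simp [h]
      _ = 1 := by rw [Finset.sum_ite_eq]; simp
  · rw [if_neg hpq]
    refine Finset.sum_eq_zero fun i _ => ?_
    show (if p = i ∧ q = i then (1:ℂ) else 0) = 0
    rw [if_neg]
    rintro ⟨rfl, rfl⟩
    exact hpq rfl

lemma stdB_eq_assemble {n w : ℕ} (h : Fin n → Fin w) (a a' : Fin n → Fin 2) :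
    Matrix.single a a' (1:ℂ) =
      assemble h (fun ν => Matrix.single (rf h ν a) (rf h ν a') 1) := by
  ext x y
  show (if a = x ∧ a' = y then (1:ℂ) else 0)
      = ∏ ν, (if rf h ν a = (fun j => x j.1) ∧ rf h ν a' = (fun j => y j.1) then (1:ℂ) else 0)
  by_cases hc : a = x ∧ a' = y
  · rw [if_pos hc]
    obtain ⟨rfl, rfl⟩ := hc
    exact (Finset.prod_eq_one fun ν _ => if_pos ⟨rfl, rfl⟩).symm
  · rw [if_neg hc]
    rcases not_and_or.mp hc with hne | hne
    · obtain ⟨i, hi⟩ := Function.ne_iff.mp hne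
      refine (Finset.prod_eq_zero (Finset.mem_univ (h i)) ?_).symm
      rw [if_neg]
      rintro ⟨h1, -⟩
      exact hi (congrFun h1 ⟨i, rfl⟩)
    · obtain ⟨i, hi⟩ := Function.ne_iff.mp hne
      refine (Finset.prod_eq_zero (Finset.mem_univ (h i)) ?_).symm
      rw [if_neg]
      rintro ⟨-, h1⟩
      exact hi (congrFun h1 ⟨i, rfl⟩)

variable {N N' w : ℕ} (T : QState N →ₗ[ℂ] QState N')
  (f : Fin N → Fin w) (g : Fin N' → Fin w)
  (Tb : ∀ ν : Fin w,
    Matrix ({i : Fin N // f i = ν} → Fin 2) ({i : Fin N // f i = ν} → Fin 2) ℂ →ₗ[ℂ]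
      Matrix ({i : Fin N' // g i = ν} → Fin 2) ({i : Fin N' // g i = ν} → Fin 2) ℂ)

variable (hdec : ∀ M, T (assemble f M) = assemble g fun ν => Tb ν (M ν))

include hdec in
lemma T_apply (X : QState N) (b b' : Fin N' → Fin 2) :
    T X b b' = ∑ a, ∑ a', X a a' *
      ∏ ν, (Tb ν (Matrix.single (rf f ν a) (rf f ν a') 1)) (rf g ν b) (rf g ν b') := by
  conv_lhs => rw [matrix_eq_sum_single X]
  rw [map_sum]
  rw [Matrix.sum_apply]
  refine Finset.sum_congr rfl fun a _ => ?_
  rw [map_sum, Matrix.sum_apply]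
  refine Finset.sum_congr rfl fun a' _ => ?_
  have h1 : Matrix.single a a' (X a a') = X a a' • Matrix.single a a' (1:ℂ) := by
    rw [smul_single, smul_eq_mul, mul_one]
  rw [h1, LinearMap.map_smul, Matrix.smul_apply, stdB_eq_assemble f, hdec, smul_eq_mul]
  rfl

lemma choi_psd {α β : Type*} [Fintype α] [DecidableEq α] [Fintype β] [DecidableEq β]
    (S : Matrix α α ℂ →ₗ[ℂ] Matrix β β ℂ) (hcp : IsCompletelyPositive S) :
    (Matrix.of fun (p q : α × β) => S (Matrix.single p.1 q.1 1) p.2 q.2).PosSemidef := by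
  classical
  set m := Fintype.card α with hm
  set ι : α ≃ Fin m := Fintype.equivFin α with hι
  set ω : α × Fin m → ℂ := fun p => if ι p.1 = p.2 then 1 else 0 with hω
  have hωstar : ∀ p, star (ω p) = ω p := by
    intro p; rw [hω]; dsimp only; split <;> simp
  set Ω : Matrix (α × Fin m) (α × Fin m) ℂ := Matrix.of fun p q => ω p * star (ω q) with hΩ
  have hΩpsd : Ω.PosSemidef := by
    refine Matrix.PosSemidef.of_dotProduct_mulVec_nonneg ?_ ?_
    · ext p q
      show star (ω q * star (ω p)) = ω p * star (ω q)
      rw [star_mul', star_star]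
      ring
    · intro v
      have hq : star v ⬝ᵥ Ω *ᵥ v
          = star (∑ q, star (ω q) * v q) * (∑ q, star (ω q) * v q) := by
        rw [QAux.quadform_expand]
        rw [star_sum, Finset.sum_mul_sum]
        refine Finset.sum_congr rfl fun p _ => Finset.sum_congr rfl fun q _ => ?_
        show star (v p) * (Ω p q * v q) = star (star (ω p) * v p) * (star (ω q) * v q)
        have : Ω p q = ω p * star (ω q) := rfl
        rw [this, star_mul', star_star]
        ring
      rw [hq]
      exact star_mul_self_nonneg _
  have h1 := hcp m Ω hΩpsd
  have h2 : (Matrix.of fun (p q : α × β) => S (Matrix.single p.1 q.1 1) p.2 q.2)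
      = (tensorIdMap S Ω).submatrix (fun p : α × β => (p.2, ι p.1)) (fun p => (p.2, ι p.1)) := by
    ext p q
    show S (Matrix.single p.1 q.1 1) p.2 q.2
        = S (Matrix.of fun a a' => Ω (a, ι p.1) (a', ι q.1)) p.2 q.2
    have harg : (Matrix.single p.1 q.1 (1:ℂ))
        = Matrix.of fun a a' => Ω (a, ι p.1) (a', ι q.1) := by
      ext a a'
      show (if p.1 = a ∧ q.1 = a' then (1:ℂ) else 0) = ω (a, ι p.1) * star (ω (a', ι q.1))
      rw [hωstar]
      show _ = (if ι a = ι p.1 then (1:ℂ) else 0) * (if ι a' = ι q.1 then (1:ℂ) else 0)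
      have e1 : (ι a = ι p.1) ↔ (p.1 = a) := by
        rw [EmbeddingLike.apply_eq_iff_eq]; exact eq_comm
      have e2 : (ι a' = ι q.1) ↔ (q.1 = a') := by
        rw [EmbeddingLike.apply_eq_iff_eq]; exact eq_comm
      rw [if_congr e1 rfl rfl, if_congr e2 rfl rfl]
      by_cases h1 : p.1 = a <;> by_cases h2 : q.1 = a' <;> simp [h1, h2]
    rw [harg]
  rw [h2]
  exact h1.submatrix _

lemma prod_ite_rf {n w : ℕ} (h : Fin n → Fin w) (a a' : Fin n → Fin 2) :
    (∏ ν, if rf h ν a = rf h ν a' then (1:ℂ) else 0) = if a = a' then 1 else 0 := by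
  by_cases hc : a = a'
  · subst hc
    rw [if_pos rfl]
    exact Finset.prod_eq_one fun ν _ => if_pos rfl
  · rw [if_neg hc]
    obtain ⟨i, hi⟩ := Function.ne_iff.mp hc
    refine Finset.prod_eq_zero (Finset.mem_univ (h i)) ?_
    rw [if_neg]
    intro h1
    exact hi (congrFun h1 ⟨i, rfl⟩)

include hdec in
lemma T_trace (htr : ∀ ν Mν, (Tb ν Mν).trace = Mν.trace) (X : QState N) :
    (T X).trace = X.trace := by
  calc (T X).trace = ∑ b, T X b b := rfl
    _ = ∑ b, ∑ a, ∑ a', X a a' *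
          ∏ ν, (Tb ν (Matrix.single (rf f ν a) (rf f ν a') 1)) (rf g ν b) (rf g ν b) := by
        exact Finset.sum_congr rfl fun b _ => T_apply T f g Tb hdec X b b
    _ = ∑ a, ∑ b, ∑ a', X a a' *
          ∏ ν, (Tb ν (Matrix.single (rf f ν a) (rf f ν a') 1)) (rf g ν b) (rf g ν b) :=
        Finset.sum_comm
    _ = ∑ a, ∑ a', ∑ b, X a a' *
          ∏ ν, (Tb ν (Matrix.single (rf f ν a) (rf f ν a') 1)) (rf g ν b) (rf g ν b) :=
        Finset.sum_congr rfl fun a _ => Finset.sum_comm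
    _ = ∑ a, ∑ a', X a a' *
          ∑ b, ∏ ν, (Tb ν (Matrix.single (rf f ν a) (rf f ν a') 1)) (rf g ν b) (rf g ν b) := by
        refine Finset.sum_congr rfl fun a _ => Finset.sum_congr rfl fun a' _ => ?_
        rw [Finset.mul_sum]
    _ = ∑ a, ∑ a', X a a' * (if a = a' then 1 else 0) := by
        refine Finset.sum_congr rfl fun a _ => Finset.sum_congr rfl fun a' _ => ?_
        congr 1
        calc ∑ b, ∏ ν, (Tb ν (Matrix.single (rf f ν a) (rf f ν a') 1)) (rf g ν b) (rf g ν b)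
            = ∏ ν, ∑ t, (Tb ν (Matrix.single (rf f ν a) (rf f ν a') 1)) t t :=
              QAux.sum_prod_fiber g
                (fun ν t => (Tb ν (Matrix.single (rf f ν a) (rf f ν a') 1)) t t)
          _ = ∏ ν, if rf f ν a = rf f ν a' then (1:ℂ) else 0 := by
              refine Finset.prod_congr rfl fun ν _ => ?_
              calc ∑ t, (Tb ν (Matrix.single (rf f ν a) (rf f ν a') 1)) t t
                  = (Tb ν (Matrix.single (rf f ν a) (rf f ν a') 1)).trace := rfl
                _ = (Matrix.single (rf f ν a) (rf f ν a') (1:ℂ)).trace := htr _ _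
                _ = _ := trace_stdB _ _
          _ = if a = a' then 1 else 0 := prod_ite_rf f a a'
    _ = ∑ a, X a a := by
        refine Finset.sum_congr rfl fun a _ => ?_
        calc ∑ a', X a a' * (if a = a' then 1 else 0)
            = ∑ a', if a = a' then X a a' else 0 := by
              refine Finset.sum_congr rfl fun a' _ => ?_
              split <;> simp
          _ = X a a := by rw [Finset.sum_ite_eq]; simp
    _ = X.trace := rfl

lemma sum5 {A B C D E : Type*} [Fintype A] [Fintype B] [Fintype C] [Fintype D] [Fintype E]
    (F : A → B → C → D → E → ℂ) :
    (∑ b, ∑ b', ∑ a, ∑ a', ∑ k, F b b' a a' k)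
      = ∑ k, ∑ a, ∑ a', ∑ b, ∑ b', F b b' a a' k := by
  calc (∑ b, ∑ b', ∑ a, ∑ a', ∑ k, F b b' a a' k)
      = ∑ b, ∑ b', ∑ a, ∑ k, ∑ a', F b b' a a' k := by
        refine Finset.sum_congr rfl fun b _ => Finset.sum_congr rfl fun b' _ =>
          Finset.sum_congr rfl fun a _ => Finset.sum_comm
    _ = ∑ b, ∑ b', ∑ k, ∑ a, ∑ a', F b b' a a' k := by
        refine Finset.sum_congr rfl fun b _ => Finset.sum_congr rfl fun b' _ =>
          Finset.sum_comm
    _ = ∑ b, ∑ k, ∑ b', ∑ a, ∑ a', F b b' a a' k := by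
        refine Finset.sum_congr rfl fun b _ => Finset.sum_comm
    _ = ∑ k, ∑ b, ∑ b', ∑ a, ∑ a', F b b' a a' k := Finset.sum_comm
    _ = ∑ k, ∑ b, ∑ a, ∑ b', ∑ a', F b b' a a' k := by
        refine Finset.sum_congr rfl fun k _ => Finset.sum_congr rfl fun b _ =>
          Finset.sum_comm
    _ = ∑ k, ∑ a, ∑ b, ∑ b', ∑ a', F b b' a a' k := by
        refine Finset.sum_congr rfl fun k _ => Finset.sum_comm
    _ = ∑ k, ∑ a, ∑ b, ∑ a', ∑ b', F b b' a a' k := by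
        refine Finset.sum_congr rfl fun k _ => Finset.sum_congr rfl fun a _ =>
          Finset.sum_congr rfl fun b _ => Finset.sum_comm
    _ = ∑ k, ∑ a, ∑ a', ∑ b, ∑ b', F b b' a a' k := by
        refine Finset.sum_congr rfl fun k _ => Finset.sum_congr rfl fun a _ =>
          Finset.sum_comm

include hdec in
lemma T_herm (hcp : ∀ ν, IsCompletelyPositive (Tb ν)) {X : QState N} (hX : X.IsHermitian) :
    (T X).IsHermitian := by
  have hC : ∀ ν, (Matrix.of fun (p q : ({i : Fin N // f i = ν} → Fin 2) × ({i : Fin N' // g i = ν} → Fin 2)) =>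
      (Tb ν) (Matrix.single p.1 q.1 1) p.2 q.2).PosSemidef := fun ν => choi_psd (Tb ν) (hcp ν)
  have hCs : ∀ ν p p' q q', star ((Tb ν (Matrix.single p p' 1)) q q')
      = (Tb ν (Matrix.single p' p 1)) q' q := fun ν p p' q q' =>
    (hC ν).1.apply (p', q') (p, q)
  ext b b'
  show star (T X b' b) = T X b b'
  rw [T_apply T f g Tb hdec X b' b, T_apply T f g Tb hdec X b b', star_sum]
  rw [show (∑ a, ∑ a', X a a' * ∏ ν, (Tb ν (Matrix.single (rf f ν a) (rf f ν a') 1)) (rf g ν b) (rf g ν b'))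
      = ∑ a', ∑ a, X a a' * ∏ ν, (Tb ν (Matrix.single (rf f ν a) (rf f ν a') 1)) (rf g ν b) (rf g ν b')
      from Finset.sum_comm]
  refine Finset.sum_congr rfl fun a _ => ?_
  rw [star_sum]
  refine Finset.sum_congr rfl fun a' _ => ?_
  rw [star_mul']
  congr 1
  · exact hX.apply a' a
  · rw [star_prod]
    exact Finset.prod_congr rfl fun ν _ => hCs ν _ _ _ _

include hdec in
lemma T_pos (hcp : ∀ ν, IsCompletelyPositive (Tb ν)) {X : QState N} (hX : X.PosSemidef) :
    (T X).PosSemidef := by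
  have hC : ∀ ν, (Matrix.of fun (p q : ({i : Fin N // f i = ν} → Fin 2) × ({i : Fin N' // g i = ν} → Fin 2)) =>
      (Tb ν) (Matrix.single p.1 q.1 1) p.2 q.2).PosSemidef := fun ν => choi_psd (Tb ν) (hcp ν)
  open scoped MatrixOrder in
  have hD := fun ν => CStarAlgebra.nonneg_iff_eq_star_mul_self.mp (hC ν).nonneg
  choose D hD using hD
  have hCe : ∀ ν (p p' : {i : Fin N // f i = ν} → Fin 2) (q q' : {i : Fin N' // g i = ν} → Fin 2),
      (Tb ν (Matrix.single p p' 1)) q q'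
        = ∑ k, star (D ν k (p, q)) * D ν k (p', q') := by
    intro ν p p' q q'
    have : (Tb ν (Matrix.single p p' 1)) q q' = (star (D ν) * D ν) (p, q) (p', q') := by
      conv_lhs => rw [show (Tb ν (Matrix.single p p' 1)) q q'
        = (Matrix.of fun (r s : _ × _) => (Tb ν) (Matrix.single r.1 s.1 1) r.2 s.2) (p, q) (p', q') from rfl, hD ν]
    rw [this, Matrix.mul_apply]
    exact Finset.sum_congr rfl fun k _ => by rw [Matrix.star_apply]
  refine Matrix.PosSemidef.of_dotProduct_mulVec_nonneg (T_herm T f g Tb hdec hcp hX.1) fun v => ?_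
  classical
  set P : (∀ ν : Fin w, (({i : Fin N // f i = ν} → Fin 2) × ({i : Fin N' // g i = ν} → Fin 2)))
      → (Fin N → Fin 2) → (Fin N' → Fin 2) → ℂ :=
    fun k a b => ∏ ν, D ν (k ν) (rf f ν a, rf g ν b) with hP
  set u : (∀ ν : Fin w, (({i : Fin N // f i = ν} → Fin 2) × ({i : Fin N' // g i = ν} → Fin 2)))
      → (Fin N → Fin 2) → ℂ := fun k a => ∑ b, P k a b * v b with hu
  have hCfac : ∀ a a' b b',
      (∏ ν, (Tb ν (Matrix.single (rf f ν a) (rf f ν a') 1)) (rf g ν b) (rf g ν b'))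
        = ∑ k, star (P k a b) * P k a' b' := by
    intro a a' b b'
    calc (∏ ν, (Tb ν (Matrix.single (rf f ν a) (rf f ν a') 1)) (rf g ν b) (rf g ν b'))
        = ∏ ν, ∑ kν, star (D ν kν (rf f ν a, rf g ν b)) * D ν kν (rf f ν a', rf g ν b') :=
          Finset.prod_congr rfl fun ν _ => hCe ν _ _ _ _
      _ = ∑ k ∈ Fintype.piFinset fun _ => Finset.univ,
            ∏ ν, star (D ν (k ν) (rf f ν a, rf g ν b)) * D ν (k ν) (rf f ν a', rf g ν b') :=
          Finset.prod_univ_sum _ _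
      _ = ∑ k, star (P k a b) * P k a' b' := by
          rw [Fintype.piFinset_univ]
          refine Finset.sum_congr rfl fun k _ => ?_
          rw [Finset.prod_mul_distrib, hP]
          congr 1
          rw [star_prod]
  have key : star v ⬝ᵥ (T X) *ᵥ v = ∑ k, star (u k) ⬝ᵥ X *ᵥ (u k) := by
    calc star v ⬝ᵥ (T X) *ᵥ v
        = ∑ b, ∑ b', star (v b) * (T X b b' * v b') := QAux.quadform_expand _ v
      _ = ∑ b, ∑ b', ∑ a, ∑ a', ∑ k,
            star (v b) * (X a a' * (star (P k a b) * (P k a' b' * v b'))) := by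
          refine Finset.sum_congr rfl fun b _ => Finset.sum_congr rfl fun b' _ => ?_
          rw [T_apply T f g Tb hdec X b b', Finset.sum_mul, Finset.mul_sum]
          refine Finset.sum_congr rfl fun a _ => ?_
          rw [Finset.sum_mul, Finset.mul_sum]
          refine Finset.sum_congr rfl fun a' _ => ?_
          rw [hCfac, Finset.mul_sum, Finset.sum_mul, Finset.mul_sum]
          refine Finset.sum_congr rfl fun k _ => ?_
          ring
      _ = ∑ k, ∑ a, ∑ a', ∑ b, ∑ b',
            star (v b) * (X a a' * (star (P k a b) * (P k a' b' * v b'))) := sum5 _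
      _ = ∑ k, ∑ a, ∑ a', star (u k a) * (X a a' * u k a') := by
          refine Finset.sum_congr rfl fun k _ => Finset.sum_congr rfl fun a _ =>
            Finset.sum_congr rfl fun a' _ => ?_
          rw [hu]
          dsimp only
          rw [star_sum, Finset.mul_sum, Finset.sum_mul_sum]
          refine Finset.sum_congr rfl fun b _ => Finset.sum_congr rfl fun b' _ => ?_
          rw [star_mul']
          ring
      _ = ∑ k, star (u k) ⬝ᵥ X *ᵥ (u k) := by
          refine Finset.sum_congr rfl fun k _ => (QAux.quadform_expand _ _).symm
  rw [key]
  exact Finset.sum_nonneg fun k _ => hX.dotProduct_mulVec_nonneg (u k)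
end Tdev

section LiftB
open Matrix QAux

variable {n : ℕ} (B : Finset (Fin n))

noncomputable def liftB (μ : Matrix (B → Fin 2) (B → Fin 2) ℂ) : QState n :=
  Matrix.of fun s t => ((Fintype.card ({i : Fin n // i ∉ B} → Fin 2) : ℂ))⁻¹ *
    (if (fun j : {i : Fin n // i ∉ B} => s j.1) = (fun j => t j.1)
      then μ (fun j => s j.1) (fun j => t j.1) else 0)

lemma liftB_sub (X Y : Matrix (B → Fin 2) (B → Fin 2) ℂ) :
    liftB B (X - Y) = liftB B X - liftB B Y := by
  ext s t
  show _ = liftB B X s t - liftB B Y s t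
  unfold liftB
  simp only [of_apply, ← mul_sub]
  congr 1
  split <;> simp [Matrix.sub_apply]

lemma card_ne' : ((Fintype.card ({i : Fin n // i ∉ B} → Fin 2) : ℂ)) ≠ 0 := by
  exact_mod_cast Fintype.card_ne_zero

lemma liftB_trace (μ : Matrix (B → Fin 2) (B → Fin 2) ℂ) : (liftB B μ).trace = μ.trace := by
  set c := ((Fintype.card ({i : Fin n // i ∉ B} → Fin 2) : ℂ))⁻¹ with hc
  calc (liftB B μ).trace
      = ∑ s : Fin n → Fin 2, c * μ (fun j : B => s j.1) (fun j => s j.1) := by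
        refine Finset.sum_congr rfl fun s _ => ?_
        show c * (if _ then _ else _) = _
        rw [if_pos rfl]
    _ = c * ∑ s : Fin n → Fin 2, μ (fun j : B => s j.1) (fun j => s j.1) := by rw [Finset.mul_sum]
    _ = c * ∑ x : B → Fin 2, ∑ z : {i : Fin n // i ∉ B} → Fin 2,
          μ (fun j : B => glue B x z j.1) (fun j => glue B x z j.1) := by
        rw [QAux.sum_glue B (fun s => μ (fun j : B => s j.1) (fun j => s j.1))]
    _ = c * ∑ x : B → Fin 2, ∑ _z : {i : Fin n // i ∉ B} → Fin 2, μ x x := by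
        congr 1
        refine Finset.sum_congr rfl fun x _ => Finset.sum_congr rfl fun z _ => ?_
        rw [restr_glue₁]
    _ = μ.trace := by
        rw [show (∑ x : B → Fin 2, ∑ _z : {i : Fin n // i ∉ B} → Fin 2, μ x x)
            = ∑ x : B → Fin 2, (Fintype.card ({i : Fin n // i ∉ B} → Fin 2) : ℂ) * μ x x from
          Finset.sum_congr rfl fun x _ => by
            rw [Finset.sum_const, Finset.card_univ, nsmul_eq_mul]]
        rw [← Finset.mul_sum, ← mul_assoc, hc, inv_mul_cancel₀ (card_ne' B), one_mul]
        rfl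

lemma liftB_posSemidef {μ : Matrix (B → Fin 2) (B → Fin 2) ℂ} (hμ : μ.PosSemidef) :
    (liftB B μ).PosSemidef := by
  set c := ((Fintype.card ({i : Fin n // i ∉ B} → Fin 2) : ℂ))⁻¹ with hc
  have hcstar : star c = c := by
    rw [hc]; simp
  have hcpos : 0 ≤ c := by
    have : c = Complex.ofReal ((Fintype.card ({i : Fin n // i ∉ B} → Fin 2) : ℝ))⁻¹ := by
      rw [hc]
      push_cast
      ring
    rw [this]
    exact Complex.zero_le_real.mpr (inv_nonneg.mpr (Nat.cast_nonneg _))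
  have hent : ∀ (x : B → Fin 2) ζ (x' : B → Fin 2) ζ',
      liftB B μ (glue B x ζ) (glue B x' ζ') = c * if ζ = ζ' then μ x x' else 0 := by
    intro x ζ x' ζ'
    show c * _ = _
    rw [restr_glue₂, restr_glue₂, restr_glue₁, restr_glue₁]
  refine Matrix.PosSemidef.of_dotProduct_mulVec_nonneg ?_ ?_
  · ext s t
    show star (liftB B μ t s) = liftB B μ s t
    unfold liftB
    simp only [of_apply]
    rw [star_mul', hcstar]
    congr 1
    by_cases h : (fun j : {i : Fin n // i ∉ B} => s j.1) = (fun j => t j.1)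
    · rw [if_pos h, if_pos h.symm]
      exact hμ.1.apply _ _
    · rw [if_neg h, if_neg (fun hh => h hh.symm), star_zero]
  · intro v
    set u : ({i : Fin n // i ∉ B} → Fin 2) → (B → Fin 2) → ℂ :=
      fun ζ x => v (glue B x ζ) with hu
    have key : star v ⬝ᵥ (liftB B μ) *ᵥ v = c * ∑ ζ, star (u ζ) ⬝ᵥ μ *ᵥ (u ζ) := by
      calc star v ⬝ᵥ (liftB B μ) *ᵥ v
          = ∑ s, ∑ t, star (v s) * (liftB B μ s t * v t) := quadform_expand _ v
        _ = ∑ x : B → Fin 2, ∑ ζ, ∑ x' : B → Fin 2, ∑ ζ',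
              star (v (glue B x ζ)) * (liftB B μ (glue B x ζ) (glue B x' ζ') * v (glue B x' ζ')) := by
            rw [← QAux.sum_glue B (fun s => ∑ t, star (v s) * (liftB B μ s t * v t))]
            refine Finset.sum_congr rfl fun x _ => Finset.sum_congr rfl fun ζ _ => ?_
            rw [← QAux.sum_glue B
              (fun t => star (v (glue B x ζ)) * (liftB B μ (glue B x ζ) t * v t))]
        _ = ∑ x : B → Fin 2, ∑ ζ, ∑ x' : B → Fin 2,
              star (v (glue B x ζ)) * ((c * μ x x') * v (glue B x' ζ)) := by
            refine Finset.sum_congr rfl fun x _ => Finset.sum_congr rfl fun ζ _ =>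
              Finset.sum_congr rfl fun x' _ => ?_
            rw [show (∑ ζ', star (v (glue B x ζ)) *
                  (liftB B μ (glue B x ζ) (glue B x' ζ') * v (glue B x' ζ')))
                = ∑ ζ', star (v (glue B x ζ)) *
                  ((c * if ζ = ζ' then μ x x' else 0) * v (glue B x' ζ')) from
              Finset.sum_congr rfl fun ζ' _ => by rw [hent]]
            simp only [mul_ite, mul_zero, ite_mul, zero_mul, Finset.sum_ite_eq,
              Finset.mem_univ, if_true]
        _ = c * ∑ ζ, ∑ x : B → Fin 2, ∑ x' : B → Fin 2,
              star (u ζ x) * (μ x x' * u ζ x') := by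
            rw [Finset.mul_sum]
            rw [show (∑ x : B → Fin 2, ∑ ζ, ∑ x' : B → Fin 2,
                star (v (glue B x ζ)) * ((c * μ x x') * v (glue B x' ζ)))
              = ∑ ζ, ∑ x : B → Fin 2, ∑ x' : B → Fin 2,
                star (v (glue B x ζ)) * ((c * μ x x') * v (glue B x' ζ)) from Finset.sum_comm]
            refine Finset.sum_congr rfl fun ζ _ => ?_
            rw [Finset.mul_sum]
            refine Finset.sum_congr rfl fun x _ => ?_
            rw [Finset.mul_sum]
            refine Finset.sum_congr rfl fun x' _ => ?_
            rw [hu]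
            dsimp only
            ring
        _ = c * ∑ ζ, star (u ζ) ⬝ᵥ μ *ᵥ (u ζ) := by
            congr 1
            exact Finset.sum_congr rfl fun ζ _ => (quadform_expand _ _).symm
    rw [key]
    exact mul_nonneg hcpos (Finset.sum_nonneg fun ζ _ => hμ.dotProduct_mulVec_nonneg (u ζ))


lemma liftB_glue (μ : Matrix (B → Fin 2) (B → Fin 2) ℂ)
    (x : B → Fin 2) (ζ : {i : Fin n // i ∉ B} → Fin 2) (x' : B → Fin 2) ζ' :
    liftB B μ (glue B x ζ) (glue B x' ζ')
      = ((Fintype.card ({i : Fin n // i ∉ B} → Fin 2) : ℂ))⁻¹ *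
        if ζ = ζ' then μ x x' else 0 := by
  unfold liftB
  rw [Matrix.of_apply, restr_glue₂, restr_glue₂, restr_glue₁, restr_glue₁]

end LiftB

section KeyId
open Matrix QAux

variable {N N' w : ℕ} (T : QState N →ₗ[ℂ] QState N')
  (f : Fin N → Fin w) (g : Fin N' → Fin w)
  (Tb : ∀ ν : Fin w,
    Matrix ({i : Fin N // f i = ν} → Fin 2) ({i : Fin N // f i = ν} → Fin 2) ℂ →ₗ[ℂ]
      Matrix ({i : Fin N' // g i = ν} → Fin 2) ({i : Fin N' // g i = ν} → Fin 2) ℂ)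
  (A : Finset (Fin N'))

def cmb (ν : Fin w) (x : A → Fin 2) (t : {j : {i : Fin N' // i ∉ A} // g j.1 = ν} → Fin 2) :
    {i : Fin N' // g i = ν} → Fin 2 :=
  fun j => if h : j.1 ∈ A then x ⟨j.1, h⟩ else t ⟨⟨j.1, h⟩, j.2⟩

variable {f} in
noncomputable def Psi (ν : Fin w) (x y : A → Fin 2)
    (p p' : {i : Fin N // f i = ν} → Fin 2) : ℂ :=
  ∑ t, (Tb ν (Matrix.single p p' 1)) (cmb g A ν x t) (cmb g A ν y t)

noncomputable def Gf (x y : A → Fin 2) (a a' : Fin N → Fin 2) : ℂ :=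
  ∏ ν, Psi g Tb A ν x y (rf f ν a) (rf f ν a')

variable (hdec : ∀ M, T (assemble f M) = assemble g fun ν => Tb ν (M ν))

include hdec in
lemma ptr_T_apply (X : QState N) (x y : A → Fin 2) :
    ptr A (T X) x y = ∑ a, ∑ a', X a a' * Gf f g Tb A x y a a' := by
  calc ptr A (T X) x y
      = ∑ z : {i : Fin N' // i ∉ A} → Fin 2, (T X) (glue A x z) (glue A y z) := rfl
    _ = ∑ z : {i : Fin N' // i ∉ A} → Fin 2, ∑ a, ∑ a', X a a' *
          ∏ ν, (Tb ν (Matrix.single (rf f ν a) (rf f ν a') 1))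
            (rf g ν (glue A x z)) (rf g ν (glue A y z)) :=
        Finset.sum_congr rfl fun z _ => T_apply T f g Tb hdec X _ _
    _ = ∑ a, ∑ z : {i : Fin N' // i ∉ A} → Fin 2, ∑ a', X a a' *
          ∏ ν, (Tb ν (Matrix.single (rf f ν a) (rf f ν a') 1))
            (rf g ν (glue A x z)) (rf g ν (glue A y z)) := Finset.sum_comm
    _ = ∑ a, ∑ a', ∑ z : {i : Fin N' // i ∉ A} → Fin 2, X a a' *
          ∏ ν, (Tb ν (Matrix.single (rf f ν a) (rf f ν a') 1))
            (rf g ν (glue A x z)) (rf g ν (glue A y z)) :=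
        Finset.sum_congr rfl fun a _ => Finset.sum_comm
    _ = ∑ a, ∑ a', X a a' * Gf f g Tb A x y a a' := by
        refine Finset.sum_congr rfl fun a _ => Finset.sum_congr rfl fun a' _ => ?_
        rw [← Finset.mul_sum]
        congr 1
        exact QAux.sum_prod_fiber (fun i : {i : Fin N' // i ∉ A} => g i.1)
          (fun ν t => (Tb ν (Matrix.single (rf f ν a) (rf f ν a') 1))
            (cmb g A ν x t) (cmb g A ν y t))

variable {f g A Tb}

lemma Psi_out (htr : ∀ ν Mν, (Tb ν Mν).trace = Mν.trace) {ν : Fin w} (hν : ν ∉ A.image g)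
    (x y : A → Fin 2) (p p' : {i : Fin N // f i = ν} → Fin 2) :
    Psi g Tb A ν x y p p' = if p = p' then 1 else 0 := by
  have hAof : ∀ j : {i : Fin N' // g i = ν}, j.1 ∉ A := fun j h =>
    hν (Finset.mem_image.mpr ⟨j.1, h, j.2⟩)
  set eb : ({j : {i : Fin N' // i ∉ A} // g j.1 = ν} → Fin 2) → ({i : Fin N' // g i = ν} → Fin 2) :=
    fun t j => t ⟨⟨j.1, hAof j⟩, j.2⟩ with heb
  have hcmb : ∀ (x : A → Fin 2) t, cmb g A ν x t = eb t := by
    intro x t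
    funext j
    exact dif_neg (hAof j)
  have hbij : Function.Bijective eb := by
    refine Function.bijective_iff_has_inverse.mpr ⟨fun v j => v ⟨j.1.1, j.2⟩, fun t => ?_, fun v => ?_⟩
    · funext j; rfl
    · funext j; rfl
  calc Psi g Tb A ν x y p p'
      = ∑ t, (Tb ν (Matrix.single p p' 1)) (cmb g A ν x t) (cmb g A ν y t) := rfl
    _ = ∑ t, (Tb ν (Matrix.single p p' 1)) (eb t) (eb t) := by
        refine Finset.sum_congr rfl fun t _ => ?_
        rw [hcmb, hcmb]
    _ = ∑ u, (Tb ν (Matrix.single p p' 1)) u u :=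
        Fintype.sum_bijective eb hbij
          (fun t => (Tb ν (Matrix.single p p' 1)) (eb t) (eb t))
          (fun u => (Tb ν (Matrix.single p p' 1)) u u) (fun t => rfl)
    _ = (Tb ν (Matrix.single p p' 1)).trace := rfl
    _ = (Matrix.single p p' (1:ℂ)).trace := htr _ _
    _ = _ := trace_stdB _ _

/-- `B`, the union of the input fibers over blocks meeting `A`. -/
abbrev Bs (f : Fin N → Fin w) (g : Fin N' → Fin w) (A : Finset (Fin N')) : Finset (Fin N) :=
  Finset.univ.filter fun i => f i ∈ A.image g

lemma mem_Bs {i : Fin N} : i ∈ Bs f g A ↔ f i ∈ A.image g := by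
  simp [Bs]

lemma memB_of (hν : ν ∈ A.image g) (j : {i : Fin N // f i = ν}) : j.1 ∈ Bs f g A :=
  mem_Bs.mpr (j.2.symm ▸ hν)

lemma notB_of {ν : Fin w} (hν : ν ∉ A.image g) (j : {i : Fin N // f i = ν}) : j.1 ∉ Bs f g A :=
  fun h => hν (j.2 ▸ mem_Bs.mp h)

lemma rf_glue_in {ν : Fin w} (hν : ν ∈ A.image g) (α : Bs f g A → Fin 2)
    (ζ : {i : Fin N // i ∉ Bs f g A} → Fin 2) :
    rf f ν (glue (Bs f g A) α ζ) = fun j => α ⟨j.1, memB_of hν j⟩ := by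
  funext j
  exact dif_pos (memB_of hν j)

lemma rf_glue_out {ν : Fin w} (hν : ν ∉ A.image g) (α : Bs f g A → Fin 2)
    (ζ : {i : Fin N // i ∉ Bs f g A} → Fin 2) :
    rf f ν (glue (Bs f g A) α ζ) = fun j => ζ ⟨j.1, notB_of hν j⟩ := by
  funext j
  exact dif_neg (notB_of hν j)

variable (f g Tb A) in
noncomputable def Hf (x y : A → Fin 2) (α α' : Bs f g A → Fin 2) : ℂ :=
  ∏ ν, if hν : ν ∈ A.image g then
    Psi g Tb A ν x y (fun j => α ⟨j.1, memB_of hν j⟩) (fun j => α' ⟨j.1, memB_of hν j⟩)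
  else 1

lemma G_glue (htr : ∀ ν Mν, (Tb ν Mν).trace = Mν.trace) (x y : A → Fin 2)
    (α α' : Bs f g A → Fin 2) (ζ : {i : Fin N // i ∉ Bs f g A} → Fin 2) :
    Gf f g Tb A x y (glue (Bs f g A) α ζ) (glue (Bs f g A) α' ζ) = Hf f g Tb A x y α α' := by
  refine Finset.prod_congr rfl fun ν _ => ?_
  by_cases hν : ν ∈ A.image g
  · rw [dif_pos hν, rf_glue_in hν, rf_glue_in hν]
  · rw [dif_neg hν, rf_glue_out hν, rf_glue_out hν, Psi_out htr hν, if_pos rfl]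

lemma G_zero (htr : ∀ ν Mν, (Tb ν Mν).trace = Mν.trace) (x y : A → Fin 2)
    (a a' : Fin N → Fin 2)
    (hne : (fun j : {i : Fin N // i ∉ Bs f g A} => a j.1) ≠ (fun j => a' j.1)) :
    Gf f g Tb A x y a a' = 0 := by
  obtain ⟨j, hj⟩ := Function.ne_iff.mp hne
  have hν : f j.1 ∉ A.image g := fun h => j.2 (mem_Bs.mpr h)
  refine Finset.prod_eq_zero (Finset.mem_univ (f j.1)) ?_
  rw [Psi_out htr hν, if_neg]
  intro h
  exact hj (congrFun h ⟨j.1, rfl⟩)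

include hdec in
lemma key_identity (htr : ∀ ν Mν, (Tb ν Mν).trace = Mν.trace) (X : QState N) :
    ptr A (T X) = ptr A (T (liftB (Bs f g A) (ptr (Bs f g A) X))) := by
  ext x y
  set B := Bs f g A with hB
  set c := ((Fintype.card ({i : Fin N // i ∉ B} → Fin 2) : ℂ))⁻¹ with hc
  rw [ptr_T_apply T f g Tb A hdec X x y,
    ptr_T_apply T f g Tb A hdec (liftB B (ptr B X)) x y]
  calc ∑ a, ∑ a', X a a' * Gf f g Tb A x y a a'
      = ∑ α : B → Fin 2, ∑ ζ, ∑ α' : B → Fin 2, ∑ ζ',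
          X (glue B α ζ) (glue B α' ζ') * Gf f g Tb A x y (glue B α ζ) (glue B α' ζ') := by
        rw [← QAux.sum_glue B (fun a => ∑ a', X a a' * Gf f g Tb A x y a a')]
        refine Finset.sum_congr rfl fun α _ => Finset.sum_congr rfl fun ζ _ => ?_
        rw [← QAux.sum_glue B (fun a' => X (glue B α ζ) a' * Gf f g Tb A x y (glue B α ζ) a')]
    _ = ∑ α : B → Fin 2, ∑ ζ, ∑ α' : B → Fin 2,
          X (glue B α ζ) (glue B α' ζ) * Hf f g Tb A x y α α' := by
        refine Finset.sum_congr rfl fun α _ => Finset.sum_congr rfl fun ζ _ =>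
          Finset.sum_congr rfl fun α' _ => ?_
        rw [Finset.sum_eq_single ζ]
        · rw [G_glue htr]
        · intro ζ' _ hζ'
          rw [G_zero htr x y _ _ (by
            rw [restr_glue₂, restr_glue₂]
            exact fun h => hζ' h.symm), mul_zero]
        · intro h
          exact absurd (Finset.mem_univ ζ) h
    _ = ∑ α : B → Fin 2, ∑ α' : B → Fin 2, ∑ ζ,
          X (glue B α ζ) (glue B α' ζ) * Hf f g Tb A x y α α' :=
        Finset.sum_congr rfl fun α _ => Finset.sum_comm
    _ = ∑ α : B → Fin 2, ∑ α' : B → Fin 2,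
          (ptr B X) α α' * Hf f g Tb A x y α α' := by
        refine Finset.sum_congr rfl fun α _ => Finset.sum_congr rfl fun α' _ => ?_
        rw [show (ptr B X) α α' = ∑ ζ, X (glue B α ζ) (glue B α' ζ) from rfl,
          Finset.sum_mul]
    _ = ∑ α : B → Fin 2, ∑ ζ, ∑ α' : B → Fin 2, ∑ ζ',
          (liftB B (ptr B X)) (glue B α ζ) (glue B α' ζ') *
            Gf f g Tb A x y (glue B α ζ) (glue B α' ζ') := by
        symm
        calc ∑ α : B → Fin 2, ∑ ζ, ∑ α' : B → Fin 2, ∑ ζ',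
              (liftB B (ptr B X)) (glue B α ζ) (glue B α' ζ') *
                Gf f g Tb A x y (glue B α ζ) (glue B α' ζ')
            = ∑ α : B → Fin 2, ∑ ζ, ∑ α' : B → Fin 2,
                c * ((ptr B X) α α' * Hf f g Tb A x y α α') := by
              refine Finset.sum_congr rfl fun α _ => Finset.sum_congr rfl fun ζ _ =>
                Finset.sum_congr rfl fun α' _ => ?_
              rw [Finset.sum_eq_single ζ]
              · rw [liftB_glue, if_pos rfl, G_glue htr, mul_assoc]
              · intro ζ' _ hζ'
                rw [liftB_glue, if_neg (fun h => hζ' h.symm), mul_zero, zero_mul]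
              · intro h
                exact absurd (Finset.mem_univ ζ) h
          _ = ∑ α : B → Fin 2, ∑ α' : B → Fin 2,
                (ptr B X) α α' * Hf f g Tb A x y α α' := by
              refine Finset.sum_congr rfl fun α _ => ?_
              rw [show (∑ ζ : {i : Fin N // i ∉ B} → Fin 2, ∑ α' : B → Fin 2,
                  c * ((ptr B X) α α' * Hf f g Tb A x y α α'))
                = ∑ α' : B → Fin 2, ∑ ζ : {i : Fin N // i ∉ B} → Fin 2,
                  c * ((ptr B X) α α' * Hf f g Tb A x y α α') from Finset.sum_comm]
              refine Finset.sum_congr rfl fun α' _ => ?_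
              rw [Finset.sum_const, Finset.card_univ, nsmul_eq_mul, ← mul_assoc,
                mul_comm (Fintype.card ({i : Fin N // i ∉ B} → Fin 2) : ℂ) c,
                hc, inv_mul_cancel₀ (card_ne' B), one_mul]
    _ = ∑ a, ∑ a', (liftB B (ptr B X)) a a' * Gf f g Tb A x y a a' := by
        rw [← QAux.sum_glue B (fun a => ∑ a', (liftB B (ptr B X)) a a' * Gf f g Tb A x y a a')]
        refine Finset.sum_congr rfl fun α _ => Finset.sum_congr rfl fun ζ _ => ?_
        rw [← QAux.sum_glue B (fun a' => (liftB B (ptr B X)) (glue B α ζ) a' *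
          Gf f g Tb A x y (glue B α ζ) a')]

end KeyId

end QAux

/-- Let `T = ⊗_ν T_ν` be a tensor product of quantum operations with respect to the
partitions of the input qubits `[N]` into the fibers `K_ν` of `f` and of the output qubits
`[N']` into the fibers `L_ν` of `g`. For `A ⊆ [N']`, let `Γ = {ν : L_ν ∩ A ≠ ∅}` and
`B = ∪_{ν ∈ Γ} K_ν` (below: `B = {i : f i ∈ g(A)}`). Then for all density matrices `ρ, σ`:
`D(T(ρ)|_A, T(σ)|_A) ≤ D(ρ|_B, σ|_B)`. -/
theorem traceDist_ptr_tensor_le {N N' w : ℕ} (T : QState N →ₗ[ℂ] QState N')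
    (f : Fin N → Fin w) (g : Fin N' → Fin w)
    (Tb : ∀ ν : Fin w,
      Matrix ({i : Fin N // f i = ν} → Fin 2) ({i : Fin N // f i = ν} → Fin 2) ℂ →ₗ[ℂ]
        Matrix ({i : Fin N' // g i = ν} → Fin 2) ({i : Fin N' // g i = ν} → Fin 2) ℂ)
    (hTb : ∀ ν, IsQuantumOp (Tb ν))
    (hdec : ∀ M, T (assemble f M) = assemble g fun ν => Tb ν (M ν))
    (A : Finset (Fin N')) (ρ σ : QState N)
    (hρ : IsDensityMatrix ρ) (hσ : IsDensityMatrix σ) :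
    traceDist (ptr A (T ρ)) (ptr A (T σ)) ≤
      traceDist (ptr (Finset.univ.filter fun i => f i ∈ A.image g) ρ)
        (ptr (Finset.univ.filter fun i => f i ∈ A.image g) σ) := by
  have hcp : ∀ ν, IsCompletelyPositive (Tb ν) := fun ν => (hTb ν).2
  have htr : ∀ ν Mν, (Tb ν Mν).trace = Mν.trace := fun ν => (hTb ν).1
  show traceDist (ptr A (T ρ)) (ptr A (T σ)) ≤
    traceDist (ptr (QAux.Bs f g A) ρ) (ptr (QAux.Bs f g A) σ)
  rw [QAux.key_identity T hdec htr ρ, QAux.key_identity T hdec htr σ]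
  unfold traceDist
  rw [show ptr A (T (QAux.liftB (QAux.Bs f g A) (ptr (QAux.Bs f g A) ρ)))
        - ptr A (T (QAux.liftB (QAux.Bs f g A) (ptr (QAux.Bs f g A) σ)))
      = ptr A (T (QAux.liftB (QAux.Bs f g A)
          (ptr (QAux.Bs f g A) ρ - ptr (QAux.Bs f g A) σ))) from by
    rw [QAux.liftB_sub, map_sub, QAux.ptr_sub]]
  have hH : (ptr (QAux.Bs f g A) ρ - ptr (QAux.Bs f g A) σ).IsHermitian :=
    ((QAux.ptr_posSemidef _ hρ.1).1).sub ((QAux.ptr_posSemidef _ hσ.1).1)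
  have hcontr := TNAux.traceNorm_map_le
    (fun μ => ptr A (T (QAux.liftB (QAux.Bs f g A) μ)))
    (fun X Y => by
      show ptr A (T (QAux.liftB (QAux.Bs f g A) (X - Y)))
          = ptr A (T (QAux.liftB (QAux.Bs f g A) X))
            - ptr A (T (QAux.liftB (QAux.Bs f g A) Y))
      rw [QAux.liftB_sub, map_sub, QAux.ptr_sub])
    (fun M hM => QAux.ptr_posSemidef _
      (QAux.T_pos T f g Tb hdec hcp (QAux.liftB_posSemidef _ hM)))
    (fun M => by rw [QAux.ptr_trace, QAux.T_trace T f g Tb hdec htr, QAux.liftB_trace])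
    hH
  linarith
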